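/- Let u_p : W → ℂ be a sequence of holomorphic functions on a connected open set W ⊂ ℂⁿ and d a positive integer. If (u_p)^d converges uniformly on compact subsets of W to the constant function 1, then there exist pairwise disjoint subsets N_0, …, N_{d−1} of ℕ whose union is cofinite in ℕ such that for each j, the subsequence (u_p)_{p ∈ N_j} converges uniformly on compact subsets of W to the constant e^{2πij/d}, provided each u_p is nowhere vanishing on W and W is simply connected. -/

import Mathlib

open Complex

section auxlemmas

lemma aux_exists_root {d : ℕ} (hd : 0 < d) {w : ℂ} {ε : ℝ} (hε : 0 < ε)
    (h : ‖w ^ d - 1‖ < ε ^ d) :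
    ∃ j : Fin d, ‖w - Complex.exp (2 * Real.pi * Complex.I * j / d)‖ < ε := by
  have : NeZero d := ⟨hd.ne'⟩
  have hprim := Complex.isPrimitiveRoot_exp d hd.ne'
  by_contra hcon
  push_neg at hcon
  have hid : w ^ d - 1 = ∏ ζ ∈ Polynomial.nthRootsFinset d (1 : ℂ), (w - ζ) := by
    have := congrArg (Polynomial.eval w) (Polynomial.X_pow_sub_one_eq_prod hd hprim)
    simpa [Polynomial.eval_prod] using this
  have hge : ∀ ζ ∈ Polynomial.nthRootsFinset d (1 : ℂ), ε ≤ ‖w - ζ‖ := by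
    intro ζ hζ
    have hζd : ζ ^ d = 1 := (Polynomial.mem_nthRootsFinset hd (1 : ℂ)).mp hζ
    obtain ⟨i, hi, hpow⟩ := hprim.eq_pow_of_pow_eq_one hζd
    have hζeq : ζ = Complex.exp (2 * Real.pi * Complex.I * (⟨i, hi⟩ : Fin d) / d) := by
      rw [← hpow, ← Complex.exp_nat_mul]
      congr 1
      push_cast
      ring
    rw [hζeq]
    exact hcon ⟨i, hi⟩
  have hcard : (Polynomial.nthRootsFinset d (1 : ℂ)).card = d := hprim.card_nthRootsFinset
  have : ε ^ d ≤ ‖w ^ d - 1‖ := by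
    rw [hid, norm_prod]
    calc ε ^ d = ∏ _ζ ∈ Polynomial.nthRootsFinset d (1 : ℂ), ε := by rw [Finset.prod_const, hcard]
    _ ≤ _ := Finset.prod_le_prod (fun _ _ => hε.le) hge
  linarith

lemma aux_good_compact {E : Type*} [NormedAddCommGroup E] [NormedSpace ℝ E]
    [ProperSpace E] {W K : Set E} (hWo : IsOpen W) (hWpc : IsPathConnected W)
    (hK : IsCompact K) (hKW : K ⊆ W) {z₀ : E} (hz₀ : z₀ ∈ W) :
    ∃ L : Set E, IsCompact L ∧ IsPreconnected L ∧ K ⊆ L ∧ L ⊆ W ∧ z₀ ∈ L := by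
  classical
  set K' := insert z₀ K with hK'def
  have hK'c : IsCompact K' := hK.insert z₀
  have hK'W : K' ⊆ W := Set.insert_subset hz₀ hKW
  have hr : ∀ x ∈ K', ∃ r, 0 < r ∧ Metric.closedBall x r ⊆ W := by
    intro x hx
    obtain ⟨r, hrpos, hball⟩ := Metric.isOpen_iff.mp hWo x (hK'W hx)
    exact ⟨r / 2, by positivity, (Metric.closedBall_subset_ball (by linarith)).trans hball⟩
  choose! r hrpos hrW using hr
  have hcover : K' ⊆ ⋃ x ∈ K', Metric.ball x (r x) := fun x hx =>
    Set.mem_biUnion hx (Metric.mem_ball_self (hrpos x hx))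
  obtain ⟨t, htK', htfin, htcover⟩ :=
    hK'c.elim_finite_subcover_image (fun x _ => Metric.isOpen_ball) hcover
  have hjoined : ∀ x : t, JoinedIn W z₀ (x : E) :=
    fun x => hWpc.joinedIn z₀ hz₀ x (hK'W (htK' x.2))
  choose γ hγ using hjoined
  have : Finite t := htfin
  set C : t → Set E := fun x => Metric.closedBall (x : E) (r x) ∪ Set.range (γ x) with hC
  refine ⟨⋃ x : t, C x, ?_, ?_, ?_, ?_, ?_⟩
  · exact isCompact_iUnion fun x =>
      (isCompact_closedBall _ _).union (isCompact_range (γ x).continuous)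
  · rw [← Set.sUnion_range]
    apply isPreconnected_sUnion z₀
    · rintro s ⟨x, rfl⟩
      exact Or.inr ⟨0, (γ x).source⟩
    · rintro s ⟨x, rfl⟩
      apply IsPreconnected.union (x : E)
      · exact Metric.mem_closedBall_self (hrpos x (htK' x.2)).le
      · exact ⟨1, (γ x).target⟩
      · exact (convex_closedBall _ _).isPreconnected
      · exact isPreconnected_range (γ x).continuous
  · intro z hz
    have := htcover (by exact Set.mem_insert_of_mem z₀ hz)
    obtain ⟨x, hxt, hxball⟩ := Set.mem_iUnion₂.mp this
    exact Set.mem_iUnion.mpr ⟨⟨x, hxt⟩, Or.inl (Metric.ball_subset_closedBall hxball)⟩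
  · rintro z hz
    obtain ⟨x, hx⟩ := Set.mem_iUnion.mp hz
    rcases hx with h | ⟨s, rfl⟩
    · exact hrW x (htK' x.2) h
    · exact hγ x s
  · have := htcover (Set.mem_insert z₀ K)
    obtain ⟨x, hxt, _⟩ := Set.mem_iUnion₂.mp this
    exact Set.mem_iUnion.mpr ⟨⟨x, hxt⟩, Or.inr ⟨0, (γ ⟨x, hxt⟩).source⟩⟩

end auxlemmas

/-- Let `u_p : W → ℂ` be nowhere-vanishing holomorphic functions on a simply
connected domain `W ⊂ ℂⁿ` and `d` a positive integer. If `(u_p)^d → 1` uniformly on compact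
subsets of `W`, then there are pairwise disjoint subsets `N_0, …, N_{d−1}` of `ℕ` with cofinite
union such that `(u_p)_{p ∈ N_j}` converges uniformly on compact subsets of `W` to the constant
`e^{2πij/d}`. -/
theorem stmt8 (n : ℕ) (W : Set (Fin n → ℂ)) (hWo : IsOpen W) (hWc : IsConnected W)
    (hWsc : SimplyConnectedSpace W)
    (d : ℕ) (hd : 0 < d)
    (u : ℕ → (Fin n → ℂ) → ℂ)
    (hu : ∀ p, DifferentiableOn ℂ (u p) W)
    (hune : ∀ p, ∀ z ∈ W, u p z ≠ 0)
    (hconv : ∀ K ⊆ W, IsCompact K →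
      TendstoUniformlyOn (fun p z => u p z ^ d) (fun _ => 1) Filter.atTop K) :
    ∃ Nj : Fin d → Set ℕ,
      (Pairwise fun j j' => Disjoint (Nj j) (Nj j')) ∧
      (⋃ j, Nj j)ᶜ.Finite ∧
      ∀ j : Fin d, ∀ K ⊆ W, IsCompact K → ∀ ε > 0, ∃ P : ℕ, ∀ p ∈ Nj j, P ≤ p →
        ∀ z ∈ K, ‖u p z - Complex.exp (2 * Real.pi * Complex.I * j / d)‖ < ε := by
  classical
  obtain ⟨z₀, hz₀⟩ := hWc.nonempty
  set θ : Fin d → ℂ := fun j => Complex.exp (2 * Real.pi * Complex.I * j / d) with hθdef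
  have hprim := Complex.isPrimitiveRoot_exp d hd.ne'
  have hθeq : ∀ j : Fin d, θ j = Complex.exp (2 * Real.pi * Complex.I / d) ^ (j : ℕ) := by
    intro j
    simp only [hθdef]
    rw [show (2 * (Real.pi:ℂ) * Complex.I * j / d : ℂ)
        = ((j:ℕ):ℂ) * (2 * (Real.pi:ℂ) * Complex.I / d) from by push_cast; ring,
      Complex.exp_nat_mul]
  have hθinj : Function.Injective θ := by
    intro j j' h
    rw [hθeq, hθeq] at h
    exact Fin.ext (hprim.pow_inj j.2 j'.2 h)
  -- the minimal gap between distinct roots of unity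
  set S : Finset ℝ := insert 1 ((Finset.univ.offDiag (α := Fin d)).image
    fun pr => ‖θ pr.1 - θ pr.2‖) with hSdef
  have hSne : S.Nonempty := ⟨1, Finset.mem_insert_self _ _⟩
  set δ₀ : ℝ := S.min' hSne with hδdef
  have hδpos : 0 < δ₀ := by
    have hall : ∀ a ∈ S, 0 < a := by
      intro a ha
      rw [hSdef, Finset.mem_insert] at ha
      rcases ha with h1 | h2
      · rw [h1]; norm_num
      · obtain ⟨pr, hpr, heq⟩ := Finset.mem_image.mp h2
        rw [Finset.mem_offDiag] at hpr
        rw [← heq, norm_pos_iff, sub_ne_zero]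
        exact fun hc => hpr.2.2 (hθinj hc)
    exact hall _ (S.min'_mem hSne)
  have hδle : ∀ j j' : Fin d, j ≠ j' → δ₀ ≤ ‖θ j - θ j'‖ := by
    intro j j' hne
    apply Finset.min'_le
    rw [hSdef]
    exact Finset.mem_insert_of_mem (Finset.mem_image.mpr
      ⟨(j, j'), Finset.mem_offDiag.mpr ⟨Finset.mem_univ _, Finset.mem_univ _, hne⟩, rfl⟩)
  set ε₀ : ℝ := δ₀ / 3 with hε₀def
  have hε₀pos : 0 < ε₀ := by positivity
  -- threshold at z₀
  have hz₀conv := Metric.tendstoUniformlyOn_iff.mp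
    (hconv {z₀} (Set.singleton_subset_iff.mpr hz₀) isCompact_singleton) (ε₀ ^ d)
    (by positivity)
  obtain ⟨P₀, hP₀⟩ := Filter.eventually_atTop.mp hz₀conv
  have hP₀' : ∀ p, P₀ ≤ p → ‖u p z₀ ^ d - 1‖ < ε₀ ^ d := by
    intro p hp
    have := hP₀ p hp z₀ rfl
    rwa [dist_comm, dist_eq_norm] at this
  set Nj : Fin d → Set ℕ := fun j => {p | P₀ ≤ p ∧ ‖u p z₀ - θ j‖ < ε₀} with hNjdef
  refine ⟨Nj, ?_, ?_, ?_⟩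
  · -- pairwise disjoint
    intro j j' hne
    rw [Set.disjoint_left]
    rintro p ⟨-, hpj⟩ ⟨-, hpj'⟩
    have : ‖θ j - θ j'‖ < δ₀ := by
      calc ‖θ j - θ j'‖ ≤ ‖θ j - u p z₀‖ + ‖u p z₀ - θ j'‖ :=
            norm_sub_le_norm_sub_add_norm_sub _ _ _
      _ = ‖u p z₀ - θ j‖ + ‖u p z₀ - θ j'‖ := by rw [norm_sub_rev]
      _ < ε₀ + ε₀ := add_lt_add hpj hpj'
      _ < δ₀ := by rw [hε₀def]; linarith
    exact absurd (hδle j j' hne) (not_le.mpr this)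
  · -- cofinite union
    apply Set.Finite.subset (Set.finite_Iio P₀)
    intro p hp
    rw [Set.mem_compl_iff, Set.mem_iUnion] at hp
    by_contra hc
    have hP₀p : P₀ ≤ p := not_lt.mp hc
    obtain ⟨j, hj⟩ := aux_exists_root hd hε₀pos (hP₀' p hP₀p)
    exact hp ⟨j, hP₀p, hj⟩
  · -- main convergence
    intro j K hKW hKc ε hε
    set ε' : ℝ := min ε ε₀ with hε'def
    have hε'pos : 0 < ε' := lt_min hε hε₀pos
    have hε'le : ε' ≤ ε₀ := min_le_right _ _
    have hWpc : IsPathConnected W := hWo.isConnected_iff_isPathConnected.mp hWc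
    obtain ⟨L, hLc, hLpre, hKL, hLW, hz₀L⟩ := aux_good_compact hWo hWpc hKc hKW hz₀
    have hLconv := Metric.tendstoUniformlyOn_iff.mp (hconv L hLW hLc) (ε' ^ d)
      (by positivity)
    obtain ⟨P, hP⟩ := Filter.eventually_atTop.mp hLconv
    refine ⟨P, fun p hpN hPp z hzK => ?_⟩
    have hPL : ∀ z ∈ L, ‖u p z ^ d - 1‖ < ε' ^ d := by
      intro z hz
      have := hP p hPp z hz
      rwa [dist_comm, dist_eq_norm] at this
    -- the open sets
    set U : Fin d → Set (Fin n → ℂ) := fun i => W ∩ (u p) ⁻¹' Metric.ball (θ i) ε'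
      with hUdef
    have hUo : ∀ i, IsOpen (U i) :=
      fun i => (hu p).continuousOn.isOpen_inter_preimage hWo Metric.isOpen_ball
    have hUmem : ∀ i z, z ∈ U i ↔ z ∈ W ∧ ‖u p z - θ i‖ < ε' := by
      intro i z
      rw [hUdef]
      simp [Metric.mem_ball, dist_eq_norm]
    have hUdisj : ∀ i i' : Fin d, i ≠ i' → Disjoint (U i) (U i') := by
      intro i i' hne
      rw [Set.disjoint_left]
      intro z hzi hzi'
      have h1 := ((hUmem i z).mp hzi).2
      have h2 := ((hUmem i' z).mp hzi').2
      have : ‖θ i - θ i'‖ < δ₀ := by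
        calc ‖θ i - θ i'‖ ≤ ‖θ i - u p z‖ + ‖u p z - θ i'‖ :=
              norm_sub_le_norm_sub_add_norm_sub _ _ _
        _ = ‖u p z - θ i‖ + ‖u p z - θ i'‖ := by rw [norm_sub_rev]
        _ < ε' + ε' := add_lt_add h1 h2
        _ ≤ ε₀ + ε₀ := add_le_add hε'le hε'le
        _ < δ₀ := by rw [hε₀def]; linarith
      exact absurd (hδle i i' hne) (not_le.mpr this)
    have hLcover : ∀ z ∈ L, ∃ i, z ∈ U i := by
      intro z hz
      obtain ⟨i, hi⟩ := aux_exists_root hd hε'pos (hPL z hz)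
      exact ⟨i, (hUmem i z).mpr ⟨hLW hz, hi⟩⟩
    -- z₀ belongs to U j
    have hz₀Uj : z₀ ∈ U j := by
      obtain ⟨i, hi⟩ := hLcover z₀ hz₀L
      have hii : i = j := by
        by_contra hne
        have h1 := ((hUmem i z₀).mp hi).2
        have h2 := hpN.2
        have : ‖θ i - θ j‖ < δ₀ := by
          calc ‖θ i - θ j‖ ≤ ‖θ i - u p z₀‖ + ‖u p z₀ - θ j‖ :=
                norm_sub_le_norm_sub_add_norm_sub _ _ _
          _ = ‖u p z₀ - θ i‖ + ‖u p z₀ - θ j‖ := by rw [norm_sub_rev]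
          _ < ε' + ε₀ := add_lt_add h1 h2
          _ ≤ ε₀ + ε₀ := add_le_add hε'le le_rfl
          _ < δ₀ := by rw [hε₀def]; linarith
        exact absurd (hδle i j hne) (not_le.mpr this)
      rw [← hii]
      exact hi
    -- connectedness argument
    have hLUj : L ⊆ U j := by
      apply hLpre.subset_left_of_subset_union (hUo j)
        (isOpen_iUnion fun i => isOpen_iUnion fun (_ : i ≠ j) => hUo i)
      · rw [Set.disjoint_iUnion_right]
        intro i
        rw [Set.disjoint_iUnion_right]
        intro hne
        exact (hUdisj i j hne).symm
      · intro z hz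
        obtain ⟨i, hi⟩ := hLcover z hz
        by_cases hij : i = j
        · exact Or.inl (hij ▸ hi)
        · exact Or.inr (Set.mem_iUnion.mpr ⟨i, Set.mem_iUnion.mpr ⟨hij, hi⟩⟩)
      · exact ⟨z₀, hz₀L, hz₀Uj⟩
    have hzUj := hLUj (hKL hzK)
    have := ((hUmem j z).mp hzUj).2
    calc ‖u p z - θ j‖ < ε' := this
    _ ≤ ε := min_le_left _ _
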